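/- Let A be a real symmetric positive semidefinite N×N matrix, τ > 0, u_0 ∈ ℝ^{N×k}, u_j = cos(jτ√A) u_0, P = cos(τ√A), and D_j = u_0ᵀ u_j. Then the stiffness matrix blocks S_{j,l} = u_jᵀ P u_l satisfy S_{j,l} = (1/4)(D_{j+l+1} + D_{|j-l-1|} + D_{j+l-1} + D_{|j-l+1|}) for all j ≥ 0 and l ≥ 1. -/
import Mathlib


open Matrix

/-- The stiffness matrix blocks `S_{j,l} = u_jᵀ P u_l` of the snapshots
`u_j = cos(jτ√A) u_0`, with `P = cos(τ√A)`, are determined by the data matrices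
`D_j = u_0ᵀ u_j`: for `j ≥ 0` and `l ≥ 1`,
`S_{j,l} = (1/4)(D_{j+l+1} + D_{|j-l-1|} + D_{j+l-1} + D_{|j-l+1|})`. -/
theorem stmt_4 {n : Type*} [Fintype n] [DecidableEq n] {k : ℕ}
    (A Q : Matrix n n ℝ) (θ : n → ℝ)
    (hQ : Q * Qᵀ = 1) (hQ' : Qᵀ * Q = 1)
    (hθ : ∀ i, 0 ≤ θ i)
    (hA : A = Q * Matrix.diagonal θ * Qᵀ)
    (hApsd : A.PosSemidef)
    (F : ℝ → Matrix n n ℝ)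
    (hF : ∀ t, F t = Q * Matrix.diagonal (fun i => Real.cos (t * Real.sqrt (θ i))) * Qᵀ)
    (τ : ℝ) (hτ : 0 < τ)
    (u0 : Matrix n (Fin k) ℝ) (u : ℕ → Matrix n (Fin k) ℝ)
    (hu : ∀ j : ℕ, u j = F (j * τ) * u0)
    (P : Matrix n n ℝ) (hP : P = F τ)
    (D : ℕ → Matrix (Fin k) (Fin k) ℝ)
    (hD : ∀ j : ℕ, D j = u0ᵀ * u j) :
    ∀ j l : ℕ, 1 ≤ l →
      (u j)ᵀ * (P * u l) =
        (1 / 4 : ℝ) • (D (j + l + 1) + D (((j : ℤ) - l - 1).natAbs)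
          + D (j + l - 1) + D (((j : ℤ) - l + 1).natAbs)) := by
  intro j l hl
  have hFsym : ∀ t, (F t)ᵀ = F t := by
    intro t; rw [hF]
    simp [Matrix.transpose_mul, Matrix.mul_assoc]
  have hFeven : ∀ t, F (-t) = F t := by
    intro t; rw [hF, hF]; simp [neg_mul, Real.cos_neg]
  have hFabs : ∀ t, F |t| = F t := by
    intro t
    rcases abs_choice t with h | h
    · rw [h]
    · rw [h]; exact hFeven t
  have hmul : ∀ s t : ℝ, F s * F t = (1/2 : ℝ) • (F (s+t) + F (s-t)) := by
    intro s t
    rw [hF, hF, hF, hF, ← Matrix.add_mul, ← Matrix.mul_add, ← Matrix.smul_mul,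
      ← Matrix.mul_smul]
    simp only [Matrix.mul_assoc]
    rw [← Matrix.mul_assoc Qᵀ Q, hQ', Matrix.one_mul,
      ← Matrix.mul_assoc (Matrix.diagonal _), Matrix.diagonal_mul_diagonal,
      Matrix.diagonal_add, ← Matrix.diagonal_smul]
    have hd : (fun i => Real.cos (s * Real.sqrt (θ i)) * Real.cos (t * Real.sqrt (θ i)))
        = (1/2 : ℝ) • fun i => Real.cos ((s+t) * Real.sqrt (θ i)) + Real.cos ((s-t) * Real.sqrt (θ i)) := by
      funext i
      simp only [Pi.smul_apply, smul_eq_mul]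
      rw [add_mul, sub_mul, Real.cos_add, Real.cos_sub]
      ring
    rw [hd]
  have key : ∀ a b c : ℝ, F a * (F b * F c) =
      (1/4 : ℝ) • (F (a+b+c) + F (a-b-c) + F (a+b-c) + F (a-b+c)) := by
    intro a b c
    rw [hmul b c, Matrix.mul_smul, Matrix.mul_add, hmul a (b+c), hmul a (b-c),
      show a+(b+c) = a+b+c by ring, show a-(b+c) = a-b-c by ring,
      show a+(b-c) = a+b-c by ring, show a-(b-c) = a-b+c by ring]
    module
  have goalF : ∀ m : ℕ, D m = u0ᵀ * F (m * τ) * u0 := by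
    intro m; rw [hD, hu, Matrix.mul_assoc]
  have e1 : ((j + l + 1 : ℕ) : ℝ) * τ = (j : ℝ) * τ + τ + (l : ℝ) * τ := by
    push_cast; ring
  have e2 : F (((((j : ℤ) - l - 1).natAbs : ℕ) : ℝ) * τ) = F ((j : ℝ) * τ - τ - (l : ℝ) * τ) := by
    have h : ((((j : ℤ) - l - 1).natAbs : ℕ) : ℝ) = |(j : ℝ) - l - 1| := by
      rw [Nat.cast_natAbs]; push_cast; ring_nf
    rw [h, show |(j : ℝ) - l - 1| * τ = |((j : ℝ) - l - 1) * τ| by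
      rw [abs_mul, abs_of_pos hτ], hFabs,
      show ((j : ℝ) - l - 1) * τ = (j : ℝ) * τ - τ - (l : ℝ) * τ by ring]
  have e3 : ((j + l - 1 : ℕ) : ℝ) * τ = (j : ℝ) * τ - τ + (l : ℝ) * τ := by
    rw [Nat.cast_sub (by omega)]; push_cast; ring
  have e4 : F (((((j : ℤ) - l + 1).natAbs : ℕ) : ℝ) * τ) = F ((j : ℝ) * τ + τ - (l : ℝ) * τ) := by
    have h : ((((j : ℤ) - l + 1).natAbs : ℕ) : ℝ) = |(j : ℝ) - l + 1| := by
      rw [Nat.cast_natAbs]; push_cast; ring_nf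
    rw [h, show |(j : ℝ) - l + 1| * τ = |((j : ℝ) - l + 1) * τ| by
      rw [abs_mul, abs_of_pos hτ], hFabs,
      show ((j : ℝ) - l + 1) * τ = (j : ℝ) * τ + τ - (l : ℝ) * τ by ring]
  rw [hu j, hu l, hP, Matrix.transpose_mul, hFsym, goalF, goalF, goalF, goalF,
    e1, e2, e3, e4]
  have hk : (u0ᵀ * F ((j : ℝ) * τ)) * (F τ * (F ((l : ℝ) * τ) * u0)) =
      u0ᵀ * (F ((j : ℝ) * τ) * (F τ * F ((l : ℝ) * τ))) * u0 := by
    simp only [Matrix.mul_assoc]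
  rw [hk, key]
  simp only [Matrix.smul_mul, Matrix.mul_smul, Matrix.add_mul, Matrix.mul_add,
    Matrix.mul_assoc]
  module
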